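/- For every continuous feasible strategy (p, I) with stopping CDF P and every T ≥ 0, it holds that c · ∫_0^T (1 − P(t)) dt ≥ Ī · P(T). Consequently, if P(t) → 1 as t → ∞ (the strategy stops almost surely), then the expected stopping time ∫_0^∞ (1 − P(t)) dt is at least Ī/c. -/

import Mathlib

open MeasureTheory

/-- Stopping CDF of a continuous-time strategy with stopping intensity `p`:
`P(t) = 1 − exp(−∫_0^t p(s) ds)`. -/
noncomputable def contCDF (p : ℝ → ℝ) (t : ℝ) : ℝ :=
  1 - Real.exp (-(∫ s in (0:ℝ)..t, p s))

/-- A continuous feasible strategy for the continuous-time relaxed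
information-acquisition problem with flow capacity `c` and target information
measure `Ibar`. -/
def ContFeasible (c Ibar : ℝ) (p I : ℝ → ℝ) : Prop :=
  ContinuousOn p (Set.Ici 0) ∧
  IntegrableOn p (Set.Ici 0) ∧
  (∀ t, 0 ≤ t → 0 ≤ p t) ∧
  I 0 = 0 ∧
  (∀ t, 0 ≤ t → 0 ≤ I t) ∧
  (∀ t, 0 ≤ t → DifferentiableWithinAt ℝ I (Set.Ici 0) t) ∧
  (∀ t, 0 ≤ t → derivWithin I (Set.Ici 0) t ≤ c - p t * (Ibar - I t))

/-- For every continuous feasible strategy, `c · ∫_0^T (1 − P(t)) dt ≥ Ī · P(T)`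
for all `T ≥ 0`; hence if the strategy stops almost surely (`P(t) → 1`), the
expected stopping time `∫_0^∞ (1 − P(t)) dt` is at least `Ī/c`. -/
lemma cont_key (c Ibar : ℝ) (hc : 0 < c) (hcI : c < Ibar)
    (p I : ℝ → ℝ) (hfeas : ContFeasible c Ibar p I) (T : ℝ) (hT : 0 ≤ T) :
    Ibar * contCDF p T ≤ c * ∫ t in (0:ℝ)..T, (1 - contCDF p t) := by
  obtain ⟨hp_cont, hp_int, hp_nn, hI0, hI_nn, hI_diff, hI_der⟩ := hfeas
  set A : ℝ → ℝ := fun t => ∫ s in (0:ℝ)..t, p s with hA_def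
  have hIbar : 0 < Ibar := hc.trans hcI
  -- interval integrability of p
  have hp_ii : ∀ t : ℝ, 0 ≤ t → IntervalIntegrable p volume 0 t := by
    intro t ht
    rw [intervalIntegrable_iff_integrableOn_Ioc_of_le ht]
    exact hp_int.mono_set (fun x hx => hx.1.le)
  -- continuity of A on Icc 0 T
  have hA_cont : ContinuousOn A (Set.Icc 0 T) := by
    have := intervalIntegral.continuousOn_primitive_interval
      (f := p) (a := (0:ℝ)) (b := T) (μ := volume)
      (by rw [Set.uIcc_of_le hT]; exact hp_int.mono_set Set.Icc_subset_Ici_self)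
    rwa [Set.uIcc_of_le hT] at this
  -- the integrand exp(-A) ; continuity
  have hE_cont : ContinuousOn (fun t => Real.exp (-(A t))) (Set.Icc 0 T) :=
    (hA_cont.neg).rexp
  have hE_int : IntegrableOn (fun t => Real.exp (-(A t))) (Set.Icc 0 T) :=
    hE_cont.integrableOn_Icc
  set B : ℝ → ℝ := fun t => ∫ s in (0:ℝ)..t, Real.exp (-(A s)) with hB_def
  have hB_cont : ContinuousOn B (Set.Icc 0 T) := by
    have := intervalIntegral.continuousOn_primitive_interval
      (f := fun t => Real.exp (-(A t))) (a := (0:ℝ)) (b := T) (μ := volume)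
      (by rw [Set.uIcc_of_le hT]; exact hE_int)
    rwa [Set.uIcc_of_le hT] at this
  have hI_cont : ContinuousOn I (Set.Icc 0 T) := fun t ht =>
    ((hI_diff t ht.1).continuousWithinAt).mono (Set.Icc_subset_Ici_self)
  -- the auxiliary function
  set H : ℝ → ℝ := fun t => c * B t - (I t - Ibar) * Real.exp (-(A t)) with hH_def
  have hH_cont : ContinuousOn H (Set.Icc 0 T) :=
    (continuousOn_const.mul hB_cont).sub ((hI_cont.sub continuousOn_const).mul hE_cont)
  -- derivative facts at interior points
  have hA_hd : ∀ x ∈ Set.Ioo (0:ℝ) T, HasDerivAt A (p x) x := by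
    intro x hx
    have hmeas : StronglyMeasurableAtFilter p (nhds x) volume :=
      (hp_cont.mono (Set.Ioi_subset_Ici_self)).stronglyMeasurableAtFilter isOpen_Ioi x hx.1
    exact intervalIntegral.integral_hasDerivAt_right (hp_ii x hx.1.le) hmeas
      (hp_cont.continuousAt (Ici_mem_nhds hx.1))
  have hE_contAt : ∀ x ∈ Set.Ioo (0:ℝ) T, ContinuousAt (fun t => Real.exp (-(A t))) x := by
    intro x hx
    exact (((hA_hd x hx).neg).exp).continuousAt
  have hB_hd : ∀ x ∈ Set.Ioo (0:ℝ) T, HasDerivAt B (Real.exp (-(A x))) x := by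
    intro x hx
    have hii : IntervalIntegrable (fun t => Real.exp (-(A t))) volume 0 x := by
      rw [intervalIntegrable_iff_integrableOn_Ioc_of_le hx.1.le]
      exact hE_int.mono_set (Set.Ioc_subset_Icc_self.trans
        (Set.Icc_subset_Icc_right hx.2.le))
    have hcE : ContinuousOn (fun t => Real.exp (-(A t))) (Set.Ioo 0 T) := fun y hy =>
      (hE_contAt y hy).continuousWithinAt
    have hmeas : StronglyMeasurableAtFilter (fun t => Real.exp (-(A t))) (nhds x) volume :=
      hcE.stronglyMeasurableAtFilter isOpen_Ioo x hx
    exact intervalIntegral.integral_hasDerivAt_right hii hmeas (hE_contAt x hx)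
  have hH_hd : ∀ x ∈ Set.Ioo (0:ℝ) T, HasDerivAt H
      (c * Real.exp (-(A x)) -
        (deriv I x * Real.exp (-(A x)) + (I x - Ibar) * (Real.exp (-(A x)) * -(p x)))) x := by
    intro x hx
    have hIx : DifferentiableAt ℝ I x :=
      (hI_diff x hx.1.le).differentiableAt (Ici_mem_nhds hx.1)
    have h1 : HasDerivAt (fun t => Real.exp (-(A t))) (Real.exp (-(A x)) * -(p x)) x :=
      ((hA_hd x hx).neg).exp
    exact ((hB_hd x hx).const_mul c).sub
      (((hIx.hasDerivAt).sub_const Ibar).mul h1)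
  have hH_mono : MonotoneOn H (Set.Icc 0 T) := by
    apply monotoneOn_of_deriv_nonneg (convex_Icc 0 T) hH_cont
    · intro x hx
      rw [interior_Icc] at hx
      exact ((hH_hd x hx).differentiableAt).differentiableWithinAt
    · intro x hx
      rw [interior_Icc] at hx
      rw [(hH_hd x hx).deriv]
      have hder : deriv I x ≤ c - p x * (Ibar - I x) := by
        rw [← derivWithin_of_mem_nhds (Ici_mem_nhds hx.1)]
        exact hI_der x hx.1.le
      have hE : (0:ℝ) < Real.exp (-(A x)) := Real.exp_pos _
      nlinarith [hE.le]
  have hend := hH_mono (Set.left_mem_Icc.2 hT) ⟨hT, le_refl T⟩ hT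
  have hA0 : A 0 = 0 := intervalIntegral.integral_same
  have hB0 : B 0 = 0 := intervalIntegral.integral_same
  have hH0 : H 0 = Ibar := by
    simp [hH_def, hB0, hA0, hI0]
  rw [hH0] at hend
  -- rewrite goal integrand
  have hint_eq : (∫ t in (0:ℝ)..T, (1 - contCDF p t)) = B T := by
    simp only [hB_def, contCDF, sub_sub_cancel]
    rfl
  rw [hint_eq]
  have hIT : 0 ≤ I T := hI_nn T hT
  have hE : (0:ℝ) < Real.exp (-(A T)) := Real.exp_pos _
  have hCDF : contCDF p T = 1 - Real.exp (-(A T)) := rfl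
  rw [hCDF]
  simp only [hH_def] at hend
  nlinarith [hE.le, Real.exp_le_one_iff (x := -(A T))]

/-- For every continuous feasible strategy -/
theorem cont_expected_stopping_time_lower_bound
    (c Ibar : ℝ) (hc : 0 < c) (hcI : c < Ibar)
    (p I : ℝ → ℝ) (hfeas : ContFeasible c Ibar p I) :
    (∀ T : ℝ, 0 ≤ T →
      Ibar * contCDF p T ≤ c * ∫ t in (0:ℝ)..T, (1 - contCDF p t)) ∧
    (Filter.Tendsto (contCDF p) Filter.atTop (nhds 1) →
      ENNReal.ofReal (Ibar / c) ≤
        ∫⁻ t in Set.Ioi (0:ℝ), ENNReal.ofReal (1 - contCDF p t)) := by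
  have key := cont_key c Ibar hc hcI p I hfeas
  refine ⟨key, fun hlim => ?_⟩
  obtain ⟨hp_cont, hp_int, -, -, -, -, -⟩ := hfeas
  have hnn : ∀ t : ℝ, 0 ≤ 1 - contCDF p t := by
    intro t
    simp only [contCDF, sub_sub_cancel]
    exact (Real.exp_pos _).le
  have hmain : ∀ T : ℝ, 0 ≤ T →
      ENNReal.ofReal (Ibar / c * contCDF p T) ≤
        ∫⁻ t in Set.Ioi (0:ℝ), ENNReal.ofReal (1 - contCDF p t) := by
    intro T hT
    have h1 : Ibar / c * contCDF p T ≤ ∫ t in (0:ℝ)..T, (1 - contCDF p t) := by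
      have h := key T hT
      rw [div_mul_eq_mul_div, div_le_iff₀ hc]
      linarith
    have hA_cont : ContinuousOn (fun t => ∫ s in (0:ℝ)..t, p s) (Set.Icc 0 T) := by
      have := intervalIntegral.continuousOn_primitive_interval
        (f := p) (a := (0:ℝ)) (b := T) (μ := volume)
        (by rw [Set.uIcc_of_le hT]; exact hp_int.mono_set Set.Icc_subset_Ici_self)
      rwa [Set.uIcc_of_le hT] at this
    have hE_int : IntegrableOn (fun t => 1 - contCDF p t) (Set.Ioc 0 T) := by
      have hcE : ContinuousOn (fun t => 1 - contCDF p t) (Set.Icc 0 T) := by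
        simp only [contCDF, sub_sub_cancel]
        exact Real.continuous_exp.comp_continuousOn hA_cont.neg
      exact hcE.integrableOn_Icc.mono_set Set.Ioc_subset_Icc_self
    have h2 : ENNReal.ofReal (∫ t in Set.Ioc (0:ℝ) T, (1 - contCDF p t)) =
        ∫⁻ t in Set.Ioc (0:ℝ) T, ENNReal.ofReal (1 - contCDF p t) :=
      ofReal_integral_eq_lintegral_ofReal hE_int
        (Filter.Eventually.of_forall fun t => hnn t)
    calc ENNReal.ofReal (Ibar / c * contCDF p T)
        ≤ ENNReal.ofReal (∫ t in Set.Ioc (0:ℝ) T, (1 - contCDF p t)) := by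
          apply ENNReal.ofReal_le_ofReal
          rwa [intervalIntegral.integral_of_le hT] at h1
      _ = ∫⁻ t in Set.Ioc (0:ℝ) T, ENNReal.ofReal (1 - contCDF p t) := h2
      _ ≤ ∫⁻ t in Set.Ioi (0:ℝ), ENNReal.ofReal (1 - contCDF p t) :=
          lintegral_mono_set Set.Ioc_subset_Ioi_self
  have htend : Filter.Tendsto (fun T => ENNReal.ofReal (Ibar / c * contCDF p T))
      Filter.atTop (nhds (ENNReal.ofReal (Ibar / c))) := by
    have h := hlim.const_mul (Ibar / c)
    rw [mul_one] at h
    exact (ENNReal.continuous_ofReal.tendsto _).comp h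
  exact le_of_tendsto htend (Filter.eventually_atTop.2 ⟨0, fun T hT => hmain T hT⟩)
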